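/- Let d be a positive integer and let G be a countable graph with all vertex degrees at most d. If G is strongly hyperfinite, then G has Property A. -/

import Mathlib

open scoped ENNReal
open MeasureTheory

namespace AFPaper

variable {V : Type*} {W : Type*}

/-- The ball of radius `r` around `x` in the graph `G`. -/
def gball (G : SimpleGraph V) (x : V) (r : ℕ) : Set V :=
  {y | G.Reachable x y ∧ G.dist x y ≤ r}

/-- All vertex degrees of `G` are at most `d`. -/
def DegLE (G : SimpleGraph V) (d : ℕ) : Prop :=
  ∀ v : V, (G.neighborSet v).Finite ∧ (G.neighborSet v).ncard ≤ d

/-- The boundary of `F` inside the induced subgraph on the ambient set `L`: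
vertices of `F` adjacent (in `G`) to some vertex of `L` outside `F`. -/
def boundaryIn (G : SimpleGraph V) (L F : Set V) : Set V :=
  {x ∈ F | ∃ y ∈ L \ F, G.Adj x y}

/-- The boundary of `F` in `G`. -/
def boundary (G : SimpleGraph V) (F : Set V) : Set V :=
  boundaryIn G Set.univ F

/-- `F` is an `ε`-Følner set with respect to the induced subgraph on `L`. -/
def IsFolnerIn (G : SimpleGraph V) (L : Set V) (ε : ℝ) (F : Set V) : Prop :=
  F.Finite ∧ ((boundaryIn G L F).ncard : ℝ) < ε * (F.ncard : ℝ)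

/-- `F` is an `ε`-Følner set in `G`. -/
def IsFolner (G : SimpleGraph V) (ε : ℝ) (F : Set V) : Prop :=
  IsFolnerIn G Set.univ ε F

/-- The set `F` has diameter at most `r` in `G`. -/
def DiamLE (G : SimpleGraph V) (r : ℕ) (F : Set V) : Prop :=
  ∀ x ∈ F, ∀ y ∈ F, G.Reachable x y ∧ G.dist x y ≤ r

/-- The connected component of `x` in the subgraph of `G` induced on `S`. -/
def componentIn (G : SimpleGraph V) (S : Set V) (x : V) : Set V :=
  {y | ∃ (hx : x ∈ S) (hy : y ∈ S), (G.induce S).Reachable ⟨x, hx⟩ ⟨y, hy⟩}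

/-- All connected components of the subgraph induced on `S` have size at most `k`. -/
def SmallComponents (G : SimpleGraph V) (S : Set V) (k : ℕ) : Prop :=
  ∀ x ∈ S, (componentIn G S x).Finite ∧ (componentIn G S x).ncard ≤ k

/-- A witness for Property A with accuracy `ε` and radius `r`. -/
def PropertyAWith (G : SimpleGraph V) (ε : ℝ) (r : ℕ) : Prop :=
  ∃ Θ : V → V → ℝ,
    (∀ x, (Function.support (Θ x)).Finite) ∧
    (∀ x y, 0 ≤ Θ x y) ∧
    (∀ x, (∑ᶠ y, Θ x y) = 1) ∧
    (∀ x y, Θ x y ≠ 0 → y ∈ gball G x r) ∧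
    (∀ x y, G.Adj x y → (∑ᶠ z, |Θ x z - Θ y z|) < ε)

/-- Property A for graphs. -/
def PropertyA (G : SimpleGraph V) : Prop :=
  ∀ ε : ℝ, 0 < ε → ∃ r : ℕ, 1 ≤ r ∧ PropertyAWith G ε r

/-- Uniform local amenability. -/
def UniformlyLocallyAmenable (G : SimpleGraph V) : Prop :=
  ∀ ε : ℝ, 0 < ε → ∃ k : ℕ, 0 < k ∧
    ∀ L : Set V, L.Finite → L.Nonempty →
      ∃ M : Set V, M ⊆ L ∧ M.Nonempty ∧ M.ncard ≤ k ∧ IsFolnerIn G L ε M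

/-- Local hyperfiniteness. -/
def LocallyHyperfinite (G : SimpleGraph V) : Prop :=
  ∀ ε : ℝ, 0 < ε → ∃ k : ℕ, 0 < k ∧
    ∀ L : Set V, L.Finite → L.Nonempty →
      ∃ L' : Set V, L' ⊆ L ∧ ((L'.ncard : ℝ) < ε * (L.ncard : ℝ)) ∧
        SmallComponents G (L \ L') k

/-- Weighted hyperfiniteness. -/
def WeightedHyperfinite (G : SimpleGraph V) : Prop :=
  ∀ ε : ℝ, 0 < ε → ∃ k : ℕ, 0 < k ∧
    ∀ w : V → ℝ, (Function.support w).Finite → (∀ x, 0 ≤ w x) →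
      ∃ L : Set V, (∑ᶠ x ∈ L, w x) ≤ ε * (∑ᶠ x, w x) ∧ SmallComponents G Lᶜ k

/-- `Y` is a `k`-separator: deleting `Y` leaves components of size at most `k`. -/
def IsSeparator (G : SimpleGraph V) (k : ℕ) (Y : Set V) : Prop :=
  SmallComponents G Yᶜ k

/-- The space of `k`-separators, as a subspace of `V → Bool` (product of discrete
spaces); its Borel σ-algebra coincides with the induced product σ-algebra used here. -/
abbrev SepSpace (G : SimpleGraph V) (k : ℕ) :=
  {f : V → Bool // IsSeparator G k {x | f x = true}}

/-- Strong hyperfiniteness. -/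
def StronglyHyperfinite (G : SimpleGraph V) : Prop :=
  ∀ ε : ℝ, 0 < ε → ∃ k : ℕ, 0 < k ∧
    ∃ μ : Measure (SepSpace G k), μ Set.univ = 1 ∧
      ∀ x : V, μ {Y : SepSpace G k | Y.1 x = true} < ENNReal.ofReal ε

/-- An `(ε,r)`-Følner packing, encoded as a partial equivalence relation
`p : V → V → Bool` ("being in the same member of the packing"); the classes are the
members of the packing, and `p x x = false` exactly when `x` is not covered. -/
structure IsPacking (G : SimpleGraph V) (ε : ℝ) (r : ℕ) (p : V → V → Bool) : Prop where
  symm : ∀ x y, p x y = true → p y x = true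
  trans : ∀ x y z, p x y = true → p y z = true → p x z = true
  folner : ∀ x, p x x = true → IsFolner G ε {y | p x y = true}
  diam : ∀ x, p x x = true → DiamLE G r {y | p x y = true}

/-- The space of `(ε,r)`-packings of `G`, as a subspace of `V → V → Bool`. -/
abbrev PackingSpace (G : SimpleGraph V) (ε : ℝ) (r : ℕ) :=
  {p : V → V → Bool // IsPacking G ε r p}

/-- Strong Følner hyperfiniteness. -/
def StronglyFolnerHyperfinite (G : SimpleGraph V) : Prop :=
  ∀ ε : ℝ, 0 < ε → ∃ r : ℕ, 1 ≤ r ∧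
    ∃ ν : Measure (PackingSpace G ε r), ν Set.univ = 1 ∧
      ∀ x : V, ENNReal.ofReal (1 - ε) < ν {P : PackingSpace G ε r | P.1 x x = true}

/-- A packing is a tiling when it covers every vertex. -/
def IsTiling (p : V → V → Bool) : Prop := ∀ x, p x x = true

/-- Strong almost finiteness. -/
def StronglyAlmostFinite (G : SimpleGraph V) : Prop :=
  ∀ ε : ℝ, 0 < ε → ∃ r : ℕ, 1 ≤ r ∧
    ∃ ν : Measure (PackingSpace G ε r), ν Set.univ = 1 ∧
      ν {P : PackingSpace G ε r | IsTiling P.1} = 1 ∧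
      ∀ x : V, ν {P : PackingSpace G ε r | x ∈ boundary G {y | P.1 x y = true}} <
        ENNReal.ofReal ε

/-- Almost finiteness: `V(G)` can be tiled by `ε`-Følner sets of diameter at most `r`. -/
def AlmostFinite (G : SimpleGraph V) : Prop :=
  ∀ ε : ℝ, 0 < ε → ∃ r : ℕ, ∃ T : Set (Set V),
    (∀ F ∈ T, IsFolner G ε F ∧ DiamLE G r F) ∧
    T.PairwiseDisjoint id ∧ ⋃₀ T = Set.univ

/-- Uniform amenability. -/
def UniformlyAmenable (G : SimpleGraph V) : Prop :=
  ∀ ε : ℝ, 0 < ε → ∃ r : ℕ, ∀ x : V, ∃ F : Set V, F ⊆ gball G x r ∧ IsFolner G ε F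

/-- The `r`-neighborhood of a set `L`. -/
def setBall (G : SimpleGraph V) (L : Set V) (r : ℕ) : Set V :=
  ⋃ x ∈ L, gball G x r

/-- The uniform Følner property. -/
def UniformlyFolner (G : SimpleGraph V) : Prop :=
  ∀ ε : ℝ, 0 < ε → ∃ r : ℕ, 1 < r ∧
    ∀ L : Set V, L.Finite → L.Nonempty →
      ∃ H : Set V, L ⊆ H ∧ H ⊆ setBall G L r ∧ IsFolner G ε H

/-- The Følner sum `Σ_x Σ_{y ∼ x} |f(x) − f(y)|`. -/
noncomputable def FolnerSum (G : SimpleGraph V) (f : V → ℝ) : ℝ :=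
  ∑ᶠ x, ∑ᶠ y ∈ G.neighborSet x, |f x - f y|

/-- `f` is an `ε`-Følner function. -/
def IsFolnerFun (G : SimpleGraph V) (ε : ℝ) (f : V → ℝ) : Prop :=
  (Function.support f).Finite ∧ (∀ x, 0 ≤ f x) ∧ f ≠ 0 ∧
    FolnerSum G f < ε * (∑ᶠ x, f x)

/-- `f` is an `ε`-Følner probability measure. -/
def IsFolnerProb (G : SimpleGraph V) (ε : ℝ) (f : V → ℝ) : Prop :=
  IsFolnerFun G ε f ∧ (∑ᶠ x, f x) = 1

/-- Følner Property A. -/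
def FolnerPropertyA (G : SimpleGraph V) : Prop :=
  ∀ ε : ℝ, 0 < ε → ∃ r : ℕ, 1 ≤ r ∧
    ∃ Θ : V → V → ℝ,
      (∀ x, IsFolnerProb G ε (Θ x)) ∧
      (∀ x y, Θ x y ≠ 0 → y ∈ gball G x r) ∧
      (∀ x y, G.Adj x y → (∑ᶠ z, |Θ x z - Θ y z|) < ε)

/-- The collection of `ε`-Følner sets of diameter at most `r`. -/
def FolnerSets (G : SimpleGraph V) (ε : ℝ) (r : ℕ) : Set (Set V) :=
  {H | IsFolner G ε H ∧ DiamLE G r H}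

/-- Fractional almost finiteness. -/
def FractionallyAlmostFinite (G : SimpleGraph V) : Prop :=
  ∀ ε : ℝ, 0 < ε → ∃ r : ℕ, 1 ≤ r ∧
    ∃ F : Set V → ℝ,
      (∀ H ∈ FolnerSets G ε r, 0 ≤ F H) ∧
      (∀ x : V, ∃ c : ℝ, 0 ≤ c ∧ c < ε ∧
        (∑ᶠ H ∈ {H ∈ FolnerSets G ε r | x ∈ H}, F H) = 1 - c) ∧
      (∀ x : V, (∑ᶠ H ∈ {H ∈ FolnerSets G ε r | x ∈ boundary G H}, F H) < ε)

/-- Subexponential growth: `lim_{r→∞} sup_x log|B_r(x)|/r = 0`. -/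
def SubexpGrowth (G : SimpleGraph V) : Prop :=
  ∀ ε : ℝ, 0 < ε → ∃ R : ℕ, ∀ r : ℕ, R ≤ r → ∀ x : V,
    Real.log ((gball G x r).ncard : ℝ) < ε * (r : ℝ)

/-- The rooted `r`-ball of `G` at `v` is rooted-isomorphic to the rooted `r`-ball of
`H` at `w`. -/
def BallIso (G : SimpleGraph V) (v : V) (H : SimpleGraph W) (w : W) (r : ℕ) : Prop :=
  ∃ (hv : v ∈ gball G v r) (hw : w ∈ gball H w r)
    (φ : ↥(gball G v r) ≃ ↥(gball H w r)),
      φ ⟨v, hv⟩ = ⟨w, hw⟩ ∧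
      ∀ a b : ↥(gball G v r), G.Adj ↑a ↑b ↔ H.Adj ↑(φ a) ↑(φ b)

/-- Neighborhood equivalence of graphs. -/
def NeighborhoodEquiv (G : SimpleGraph V) (H : SimpleGraph W) : Prop :=
  (∀ (r : ℕ) (v : V), ∃ w : W, BallIso G v H w r) ∧
  (∀ (r : ℕ) (w : W), ∃ v : V, BallIso H w G v r)

end AFPaper


namespace AFPaper

variable {V : Type*}

/-! ### Auxiliary lemmas: finiteness of balls -/

/-- iterated neighborhoods -/
def nbhd (G : SimpleGraph V) (x : V) : ℕ → Set V
  | 0 => {x}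
  | n+1 => nbhd G x n ∪ ⋃ v ∈ nbhd G x n, G.neighborSet v

lemma nbhd_finite (G : SimpleGraph V) (hG : ∀ v, (G.neighborSet v).Finite) (x : V) :
    ∀ n, (nbhd G x n).Finite
  | 0 => Set.finite_singleton x
  | n+1 => ((nbhd_finite G hG x n).union ((nbhd_finite G hG x n).biUnion fun v _ => hG v))

lemma nbhd_succ_of_adj (G : SimpleGraph V) {x u : V} (h : G.Adj x u) :
    ∀ n, nbhd G u n ⊆ nbhd G x (n+1)
  | 0 => by
      intro v hv
      have hv : v = u := hv
      subst hv
      exact Or.inr (Set.mem_biUnion (Set.mem_singleton x) h)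
  | n+1 => by
      intro v hv
      rcases hv with hv | hv
      · exact Or.inl (nbhd_succ_of_adj G h n hv)
      · rcases Set.mem_iUnion₂.1 hv with ⟨w, hw, hvw⟩
        exact Or.inr (Set.mem_biUnion (nbhd_succ_of_adj G h n hw) hvw)

lemma nbhd_mono_succ (G : SimpleGraph V) (x : V) (n : ℕ) : nbhd G x n ⊆ nbhd G x (n+1) :=
  Set.subset_union_left

lemma walk_mem_nbhd (G : SimpleGraph V) : ∀ {x y : V} (w : G.Walk x y) (n : ℕ),
    w.length ≤ n → y ∈ nbhd G x n := by
  intro x y w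
  induction w with
  | nil =>
    intro n _
    induction n with
    | zero => exact rfl
    | succ m ih => exact nbhd_mono_succ G _ m (ih (Nat.zero_le m))
  | @cons a b c h p ih =>
    intro n hn
    rw [SimpleGraph.Walk.length_cons] at hn
    obtain ⟨m, rfl⟩ : ∃ m, n = m + 1 := ⟨n - 1, by omega⟩
    exact nbhd_succ_of_adj G h m (ih m (by omega))

lemma gball_finite (G : SimpleGraph V) (hG : ∀ v, (G.neighborSet v).Finite) (x : V) (r : ℕ) :
    (gball G x r).Finite := by
  refine (nbhd_finite G hG x r).subset ?_
  rintro y ⟨hreach, hdist⟩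
  obtain ⟨w, hw⟩ := hreach.exists_walk_length_eq_dist
  exact walk_mem_nbhd G w r (hw ▸ hdist)

lemma mem_gball_self {G : SimpleGraph V} (x : V) (k : ℕ) : x ∈ gball G x k :=
  ⟨SimpleGraph.Reachable.refl x, by rw [SimpleGraph.dist_self]; exact Nat.zero_le k⟩

/-! ### Auxiliary lemmas: components -/

lemma induce_walk_support {G : SimpleGraph V} {S : Set V} {a b : ↥S}
    (w : (G.induce S).Walk a b) : ∃ w' : G.Walk ↑a ↑b, ∀ v ∈ w'.support, v ∈ S := by
  induction w with
  | nil =>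
      exact ⟨SimpleGraph.Walk.nil, by
        rintro v hv
        rw [SimpleGraph.Walk.support_nil, List.mem_singleton] at hv
        exact hv ▸ Subtype.coe_prop _⟩
  | @cons a c b h p ih =>
    obtain ⟨w', hw'⟩ := ih
    refine ⟨SimpleGraph.Walk.cons (by exact h) w', ?_⟩
    intro v hv
    replace hv : v = ↑a ∨ v ∈ w'.support := List.mem_cons.1 hv
    rcases hv with rfl | hv
    · exact a.2
    · exact hw' v hv

lemma walk_to_induce_reachable {G : SimpleGraph V} {S : Set V} :
    ∀ {x y : V} (w : G.Walk x y) (_ : ∀ v ∈ w.support, v ∈ S),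
      (G.induce S).Reachable
        ⟨x, by exact (by assumption : ∀ v ∈ w.support, v ∈ S) x w.start_mem_support⟩
        ⟨y, by exact (by assumption : ∀ v ∈ w.support, v ∈ S) y w.end_mem_support⟩ := by
  intro x y w
  induction w with
  | nil => intro h; rfl
  | @cons a c b h p ih =>
    intro hs
    have hsp : ∀ v ∈ p.support, v ∈ S := fun v hv =>
      hs v (by rw [SimpleGraph.Walk.support_cons]; exact List.mem_cons_of_mem _ hv)
    have ha : a ∈ S := hs a (SimpleGraph.Walk.start_mem_support _)
    have hc : c ∈ S := hsp c p.start_mem_support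
    have hadj : (G.induce S).Adj ⟨a, ha⟩ ⟨c, hc⟩ := h
    exact hadj.reachable.trans (ih hsp)

lemma mem_componentIn_iff {G : SimpleGraph V} {S : Set V} {x y : V} :
    y ∈ componentIn G S x ↔ ∃ w : G.Walk x y, ∀ v ∈ w.support, v ∈ S := by
  constructor
  · rintro ⟨hx, hy, hr⟩
    obtain ⟨w⟩ := hr
    exact induce_walk_support w
  · rintro ⟨w, hw⟩
    exact ⟨hw x w.start_mem_support, hw y w.end_mem_support, walk_to_induce_reachable w hw⟩

lemma support_mem_componentIn {G : SimpleGraph V} {S : Set V} {x y : V}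
    (w : G.Walk x y) (hw : ∀ v ∈ w.support, v ∈ S) :
    ∀ v ∈ w.support, v ∈ componentIn G S x := by
  classical
  intro v hv
  exact mem_componentIn_iff.2 ⟨w.takeUntil v hv, fun u hu =>
    hw u (SimpleGraph.Walk.support_takeUntil_subset w hv hu)⟩

lemma mem_componentIn_self {G : SimpleGraph V} {S : Set V} {x : V} (hx : x ∈ S) :
    x ∈ componentIn G S x := ⟨hx, hx, SimpleGraph.Reachable.refl _⟩

lemma componentIn_subset_gball {G : SimpleGraph V} {S : Set V} {x : V} {k : ℕ}
    (hfin : (componentIn G S x).Finite) (hcard : (componentIn G S x).ncard ≤ k) :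
    componentIn G S x ⊆ gball G x k := by
  classical
  intro z hz
  obtain ⟨w, hw⟩ := mem_componentIn_iff.1 hz
  have hbp : ∀ v ∈ w.bypass.support, v ∈ S := fun v hv =>
    hw v (SimpleGraph.Walk.support_bypass_subset w hv)
  have hmem : ∀ v ∈ w.bypass.support, v ∈ componentIn G S x :=
    support_mem_componentIn w.bypass hbp
  have hnodup : w.bypass.support.Nodup := w.bypass_isPath.support_nodup
  have hsub : ↑w.bypass.support.toFinset ⊆ componentIn G S x := by
    intro v hv
    exact hmem v (List.mem_toFinset.1 hv)
  have hcard2 : w.bypass.support.toFinset.card ≤ (componentIn G S x).ncard := by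
    rw [← Set.ncard_coe_finset]
    exact Set.ncard_le_ncard hsub hfin
  rw [List.toFinset_card_of_nodup hnodup, SimpleGraph.Walk.length_support] at hcard2
  refine ⟨⟨w⟩, le_trans (SimpleGraph.dist_le w.bypass) (by omega)⟩

lemma componentIn_mono_of_agree {G : SimpleGraph V} {S S' : Set V} {x : V} {k : ℕ}
    (hfin : (componentIn G S x).Finite) (hcard : (componentIn G S x).ncard ≤ k)
    (hagree : ∀ v ∈ gball G x k, v ∈ S → v ∈ S') :
    componentIn G S x ⊆ componentIn G S' x := by
  intro z hz
  obtain ⟨w, hw⟩ := mem_componentIn_iff.1 hz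
  refine mem_componentIn_iff.2 ⟨w, fun v hv => ?_⟩
  exact hagree v (componentIn_subset_gball hfin hcard
    (support_mem_componentIn w hw v hv)) (hw v hv)

lemma componentIn_eq_of_adj {G : SimpleGraph V} {S : Set V} {x y : V}
    (hx : x ∈ S) (hy : y ∈ S) (hxy : G.Adj x y) :
    componentIn G S x = componentIn G S y := by
  ext z
  simp only [mem_componentIn_iff]
  constructor
  · rintro ⟨w, hw⟩
    refine ⟨SimpleGraph.Walk.cons hxy.symm w, fun v hv => ?_⟩
    rw [SimpleGraph.Walk.support_cons, List.mem_cons] at hv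
    rcases hv with rfl | hv
    · exact hy
    · exact hw v hv
  · rintro ⟨w, hw⟩
    refine ⟨SimpleGraph.Walk.cons hxy w, fun v hv => ?_⟩
    rw [SimpleGraph.Walk.support_cons, List.mem_cons] at hv
    rcases hv with rfl | hv
    · exact hx
    · exact hw v hv

/-! ### Separator components and measurable events -/

/-- the complement of the separator, as the vertex set of the remaining graph -/
def sepS {G : SimpleGraph V} {k : ℕ} (Y : SepSpace G k) : Set V :=
  {x | Y.1 x = true}ᶜ

lemma mem_sepS {G : SimpleGraph V} {k : ℕ} {Y : SepSpace G k} {v : V} :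
    v ∈ sepS Y ↔ Y.1 v = false := by simp [sepS]

/-- the component of x after removing the separator Y -/
def sepComp (G : SimpleGraph V) {k : ℕ} (Y : SepSpace G k) (x : V) : Set V :=
  componentIn G (sepS Y) x

lemma sepComp_small {G : SimpleGraph V} {k : ℕ} (Y : SepSpace G k) {x : V}
    (hx : Y.1 x = false) : (sepComp G Y x).Finite ∧ (sepComp G Y x).ncard ≤ k :=
  Y.2 x (mem_sepS.2 hx)

lemma measurable_eval {G : SimpleGraph V} {k : ℕ} (v : V) :
    Measurable (fun Y : SepSpace G k => Y.1 v) :=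
  (measurable_pi_apply v).comp measurable_subtype_coe

lemma measurableSet_of_local [Countable V] {G : SimpleGraph V} {k : ℕ} (T : Set V)
    (hT : T.Finite) (A : Set (SepSpace G k))
    (h : ∀ Y Y' : SepSpace G k, (∀ v ∈ T, Y.1 v = Y'.1 v) → Y ∈ A → Y' ∈ A) :
    MeasurableSet A := by
  haveI : Finite ↥T := hT
  set π : SepSpace G k → (↥T → Bool) := fun Y t => Y.1 ↑t with hπ
  have hπm : Measurable π := measurable_pi_iff.mpr fun t => measurable_eval (G := G) (k := k) (t : V)
  have hA : A = π ⁻¹' (π '' A) := by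
    apply Set.Subset.antisymm (Set.subset_preimage_image π A)
    rintro Y ⟨Y', hY', hYY⟩
    exact h Y' Y (fun v hv => congrFun hYY ⟨v, hv⟩) hY'
  rw [hA]
  exact hπm (Set.toFinite (π '' A)).measurableSet

/-- event sets -/
def sepA (G : SimpleGraph V) (k : ℕ) (x z : V) (j : ℕ) : Set (SepSpace G k) :=
  {Y | Y.1 x = false ∧ z ∈ sepComp G Y x ∧ (sepComp G Y x).ncard = j}
def sepB (G : SimpleGraph V) (k : ℕ) (x : V) (j : ℕ) : Set (SepSpace G k) :=
  {Y | Y.1 x = false ∧ (sepComp G Y x).ncard = j}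
def sepE (G : SimpleGraph V) (k : ℕ) (x : V) : Set (SepSpace G k) :=
  {Y | Y.1 x = true}

lemma sepComp_congr {G : SimpleGraph V} {k : ℕ} {x : V} {Y Y' : SepSpace G k}
    (hx : Y.1 x = false)
    (hagree : ∀ v ∈ gball G x k, Y.1 v = Y'.1 v) :
    sepComp G Y x = sepComp G Y' x := by
  have hx' : Y'.1 x = false := by
    rw [← hagree x (mem_gball_self x k)]; exact hx
  obtain ⟨hf, hc⟩ := sepComp_small Y hx
  obtain ⟨hf', hc'⟩ := sepComp_small Y' hx'
  refine Set.Subset.antisymm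
    (componentIn_mono_of_agree hf hc fun v hv hvS => ?_)
    (componentIn_mono_of_agree hf' hc' fun v hv hvS => ?_)
  · rw [mem_sepS] at hvS ⊢; rw [← hagree v hv]; exact hvS
  · rw [mem_sepS] at hvS ⊢; rw [hagree v hv]; exact hvS

lemma measurableSet_sepE [Countable V] {G : SimpleGraph V} {k : ℕ} (x : V) :
    MeasurableSet (sepE G k x) :=
  measurable_eval x (MeasurableSet.singleton true)

lemma measurableSet_sepA [Countable V] {G : SimpleGraph V} {k : ℕ} (x z : V) (j : ℕ)
    (hfin : (gball G x k).Finite) : MeasurableSet (sepA G k x z j) := by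
  refine measurableSet_of_local (gball G x k) hfin _ ?_
  rintro Y Y' hag ⟨hx, hz, hj⟩
  have hx' : Y'.1 x = false := by rw [← hag x (mem_gball_self x k)]; exact hx
  have hcc := sepComp_congr hx hag
  exact ⟨hx', hcc ▸ hz, hcc ▸ hj⟩

lemma measurableSet_sepB [Countable V] {G : SimpleGraph V} {k : ℕ} (x : V) (j : ℕ)
    (hfin : (gball G x k).Finite) : MeasurableSet (sepB G k x j) := by
  refine measurableSet_of_local (gball G x k) hfin _ ?_
  rintro Y Y' hag ⟨hx, hj⟩
  have hx' : Y'.1 x = false := by rw [← hag x (mem_gball_self x k)]; exact hx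
  have hcc := sepComp_congr hx hag
  exact ⟨hx', hcc ▸ hj⟩

/-- counting lemma -/
lemma sum_measure_sepA [Countable V] {G : SimpleGraph V} {k : ℕ}
    (μ : Measure (SepSpace G k)) (x : V) (j : ℕ) (s : Finset V)
    (hball : (gball G x k).Finite) (hs : gball G x k ⊆ ↑s)
    (E : Set (SepSpace G k)) (hE : MeasurableSet E) :
    ∑ z ∈ s, μ (sepA G k x z j ∩ E) = (j : ℝ≥0∞) * μ (sepB G k x j ∩ E) := by
  classical
  have hAm : ∀ z : V, MeasurableSet (sepA G k x z j ∩ E) :=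
    fun z => (measurableSet_sepA x z j hball).inter hE
  have hBm : MeasurableSet (sepB G k x j ∩ E) :=
    (measurableSet_sepB x j hball).inter hE
  calc ∑ z ∈ s, μ (sepA G k x z j ∩ E)
      = ∑ z ∈ s, ∫⁻ Y, (sepA G k x z j ∩ E).indicator 1 Y ∂μ := by
        refine Finset.sum_congr rfl fun z _ => ?_
        rw [lintegral_indicator_one (hAm z)]
    _ = ∫⁻ Y, ∑ z ∈ s, (sepA G k x z j ∩ E).indicator 1 Y ∂μ :=
        (lintegral_finset_sum s fun z _ => measurable_one.indicator (hAm z)).symm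
    _ = ∫⁻ Y, (j : ℝ≥0∞) * (sepB G k x j ∩ E).indicator 1 Y ∂μ := by
        refine lintegral_congr fun Y => ?_
        by_cases hY : Y ∈ sepB G k x j ∩ E
        · obtain ⟨⟨hx, hj⟩, hYE⟩ := hY
          have hCfin : (sepComp G Y x).Finite := (sepComp_small Y hx).1
          have hCsub : sepComp G Y x ⊆ ↑s :=
            (componentIn_subset_gball hCfin (sepComp_small Y hx).2).trans hs
          have hterm : ∀ z ∈ s, (sepA G k x z j ∩ E).indicator (1 : SepSpace G k → ℝ≥0∞) Y
              = if z ∈ sepComp G Y x then 1 else 0 := by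
            intro z _
            by_cases hz : z ∈ sepComp G Y x
            · have hmem : Y ∈ sepA G k x z j ∩ E := ⟨⟨hx, hz, hj⟩, hYE⟩
              rw [if_pos hz, Set.indicator_of_mem hmem]
              rfl
            · rw [if_neg hz,
                Set.indicator_of_notMem (fun h : Y ∈ sepA G k x z j ∩ E => hz h.1.2.1)]
          rw [Finset.sum_congr rfl hterm, Finset.sum_boole]
          have hfilt : s.filter (· ∈ sepComp G Y x) = hCfin.toFinset := by
            ext v
            simp only [Finset.mem_filter, Set.Finite.mem_toFinset]
            exact ⟨fun h => h.2, fun h => ⟨hCsub h, h⟩⟩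
          have hmemB : Y ∈ sepB G k x j ∩ E := ⟨⟨hx, hj⟩, hYE⟩
          rw [hfilt, Set.indicator_of_mem hmemB, ← Set.ncard_eq_toFinset_card _ hCfin, hj]
          simp
        · have hz : ∀ z ∈ s, (sepA G k x z j ∩ E).indicator (1 : SepSpace G k → ℝ≥0∞) Y = 0 := by
            intro z _
            exact Set.indicator_of_notMem
              (fun h : Y ∈ sepA G k x z j ∩ E => hY ⟨⟨h.1.1, h.1.2.2⟩, h.2⟩) _
          rw [Finset.sum_congr rfl hz, Finset.sum_const, smul_zero,
            Set.indicator_of_notMem hY, mul_zero]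
    _ = (j : ℝ≥0∞) * μ (sepB G k x j ∩ E) := by
        rw [lintegral_const_mul _ (measurable_one.indicator hBm), lintegral_indicator_one hBm]

lemma sepB_pairwiseDisjoint {G : SimpleGraph V} {k : ℕ} (x : V) (t : Finset ℕ) :
    (↑t : Set ℕ).PairwiseDisjoint (sepB G k x) := by
  intro j _ j' _ hne
  rw [Function.onFun, Set.disjoint_left]
  rintro Y ⟨_, hj⟩ ⟨_, hj'⟩
  exact hne (hj ▸ hj')

lemma sepE_union_sepB {G : SimpleGraph V} {k : ℕ} (x : V) (hk : 0 < k) :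
    sepE G k x ∪ ⋃ j ∈ Finset.Icc 1 k, sepB G k x j = Set.univ := by
  ext Y
  simp only [Set.mem_union, Set.mem_iUnion, Set.mem_univ, iff_true]
  cases hb : Y.1 x with
  | true => exact Or.inl hb
  | false =>
    refine Or.inr ⟨(sepComp G Y x).ncard, ⟨?_, ⟨hb, rfl⟩⟩⟩
    have hx : x ∈ sepComp G Y x := mem_componentIn_self (mem_sepS.2 hb)
    have hpos : 0 < (sepComp G Y x).ncard :=
      (Set.ncard_pos (sepComp_small Y hb).1).2 ⟨x, hx⟩
    simp only [Finset.mem_Icc]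
    exact ⟨hpos, (sepComp_small Y hb).2⟩

end AFPaper

namespace AFPaper

/-- Strong hyperfiniteness implies Property A. -/
theorem stronglyHyperfinite_implies_propertyA
    (d : ℕ) (hd : 0 < d) {V : Type} [Countable V]
    (G : SimpleGraph V) (hdeg : DegLE G d)
    (hSH : StronglyHyperfinite G) :
    PropertyA G := by
  classical
  intro ε hε
  obtain ⟨k, hk, μ, hμu, hμx⟩ := hSH (ε / 6) (by positivity)
  have hnb : ∀ v, (G.neighborSet v).Finite := fun v => (hdeg v).1
  have hballfin : ∀ x : V, (gball G x k).Finite := fun x => gball_finite G hnb x k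
  have hfinmeas : ∀ S : Set (SepSpace G k), μ S ≠ ∞ := by
    intro S
    have h1 : μ S ≤ 1 := hμu ▸ measure_mono (Set.subset_univ S)
    exact ne_top_of_le_ne_top ENNReal.one_ne_top h1
  -- the kernel
  set Θ : V → V → ℝ := fun x z =>
    (∑ j ∈ Finset.Icc 1 k, (μ (sepA G k x z j)).toReal / j) +
      (if z = x then (μ (sepE G k x)).toReal else 0) with hΘdef
  -- vanishing outside balls
  have hvanish : ∀ x z : V, z ∉ gball G x k → Θ x z = 0 := by
    intro x z hz
    have hA : ∀ j, sepA G k x z j = ∅ := by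
      intro j
      ext Y
      simp only [Set.mem_empty_iff_false, iff_false]
      rintro ⟨hx, hzC, _⟩
      exact hz (componentIn_subset_gball (sepComp_small Y hx).1 (sepComp_small Y hx).2 hzC)
    have hzx : z ≠ x := fun h => hz (by rw [h]; exact mem_gball_self x k)
    simp [hΘdef, hA, hzx]
  -- nonnegativity
  have hnonneg : ∀ x z : V, 0 ≤ Θ x z := by
    intro x z
    rw [hΘdef]
    have h1 : (0:ℝ) ≤ ∑ j ∈ Finset.Icc 1 k, (μ (sepA G k x z j)).toReal / j :=
      Finset.sum_nonneg fun j _ => div_nonneg ENNReal.toReal_nonneg (Nat.cast_nonneg j)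
    have h2 : (0:ℝ) ≤ if z = x then (μ (sepE G k x)).toReal else 0 := by
      split <;> simp [ENNReal.toReal_nonneg]
    exact add_nonneg h1 h2
  -- partition identity, ENNReal level
  have hpart : ∀ x : V, μ (sepE G k x) + ∑ j ∈ Finset.Icc 1 k, μ (sepB G k x j) = 1 := by
    intro x
    rw [← measure_biUnion_finset (sepB_pairwiseDisjoint x _)
      (fun j _ => measurableSet_sepB x j (hballfin x)),
      ← measure_union ?_ ((Finset.Icc 1 k).measurableSet_biUnion
        fun j _ => measurableSet_sepB x j (hballfin x)),
      sepE_union_sepB x hk, hμu]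
    · rw [Set.disjoint_left]
      rintro Y hYE hYB
      simp only [Set.mem_iUnion] at hYB
      obtain ⟨j, _, hYj, _⟩ := hYB
      have hYE' : Y.1 x = true := hYE
      rw [hYE'] at hYj
      simp at hYj
  -- generic computation of the weighted sums
  have hcount : ∀ (x : V) (s : Finset V), gball G x k ⊆ ↑s →
      ∀ (E : Set (SepSpace G k)), MeasurableSet E →
      ∀ j ∈ Finset.Icc 1 k,
      ∑ z ∈ s, (μ (sepA G k x z j ∩ E)).toReal / j = (μ (sepB G k x j ∩ E)).toReal := by
    intro x s hs E hE j hj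
    have hj1 : 1 ≤ j := (Finset.mem_Icc.1 hj).1
    have hjne : (j : ℝ) ≠ 0 := by positivity
    rw [← Finset.sum_div]
    have hsum := sum_measure_sepA μ x j s (hballfin x) hs E hE
    have htr : ∑ z ∈ s, (μ (sepA G k x z j ∩ E)).toReal
        = ((j : ℝ≥0∞) * μ (sepB G k x j ∩ E)).toReal := by
      rw [← hsum, ENNReal.toReal_sum (fun z _ => hfinmeas _)]
    rw [htr, ENNReal.toReal_mul, ENNReal.toReal_natCast]
    field_simp
  -- total mass 1
  have hsum1 : ∀ x : V, (∑ᶠ z, Θ x z) = 1 := by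
    intro x
    have hsupp : Function.support (Θ x) ⊆ ↑(hballfin x).toFinset := by
      intro z hz
      rw [Set.Finite.coe_toFinset]
      by_contra hzb
      exact hz (hvanish x z hzb)
    rw [finsum_eq_finset_sum_of_support_subset _ hsupp]
    set s := (hballfin x).toFinset with hsdef
    have hscoe : gball G x k ⊆ ↑s := by rw [hsdef, Set.Finite.coe_toFinset]
    have hxs : x ∈ s := (Set.Finite.mem_toFinset _).2 (mem_gball_self x k)
    have hexp : ∀ z, Θ x z = (∑ j ∈ Finset.Icc 1 k, (μ (sepA G k x z j ∩ Set.univ)).toReal / j)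
        + (if z = x then (μ (sepE G k x)).toReal else 0) := by
      intro z; simp [hΘdef]
    calc ∑ z ∈ s, Θ x z
        = (∑ z ∈ s, ∑ j ∈ Finset.Icc 1 k, (μ (sepA G k x z j ∩ Set.univ)).toReal / j)
          + ∑ z ∈ s, (if z = x then (μ (sepE G k x)).toReal else 0) := by
          rw [← Finset.sum_add_distrib]
          exact Finset.sum_congr rfl fun z _ => hexp z
      _ = (∑ j ∈ Finset.Icc 1 k, (μ (sepB G k x j ∩ Set.univ)).toReal)
          + (μ (sepE G k x)).toReal := by
          rw [Finset.sum_comm, Finset.sum_ite_eq' s x fun _ => (μ (sepE G k x)).toReal,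
            if_pos hxs]
          congr 1
          exact Finset.sum_congr rfl fun j hj =>
            hcount x s hscoe Set.univ MeasurableSet.univ j hj
      _ = 1 := by
          simp only [Set.inter_univ]
          have := congrArg ENNReal.toReal (hpart x)
          rw [ENNReal.toReal_add (hfinmeas _) (by
              exact (ENNReal.sum_lt_top.mpr fun j _ => (hfinmeas _).lt_top).ne),
            ENNReal.toReal_sum (fun j _ => hfinmeas _), ENNReal.toReal_one] at this
          linarith
  -- the small-measure bounds
  have hEsmall : ∀ v : V, (μ (sepE G k v)).toReal < ε / 6 := by
    intro v
    have := hμx v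
    exact ENNReal.toReal_lt_of_lt_ofReal this
  refine ⟨k, hk, Θ, ?_, hnonneg, hsum1, ?_, ?_⟩
  · intro x
    exact (hballfin x).subset fun z hz => by
      by_contra hzb
      exact hz (hvanish x z hzb)
  · intro x z hz
    by_contra hzb
    exact hz (hvanish x z hzb)
  -- the adjacency estimate
  · intro x y hxy
    set E : Set (SepSpace G k) := sepE G k x ∪ sepE G k y with hEdef
    have hEm : MeasurableSet E := (measurableSet_sepE x).union (measurableSet_sepE y)
    set s2 : Finset V := ((hballfin x).union (hballfin y)).toFinset with hs2def
    have hs2x : gball G x k ⊆ ↑s2 := by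
      rw [hs2def, Set.Finite.coe_toFinset]; exact Set.subset_union_left
    have hs2y : gball G y k ⊆ ↑s2 := by
      rw [hs2def, Set.Finite.coe_toFinset]; exact Set.subset_union_right
    have hxs2 : x ∈ s2 := hs2x (mem_gball_self x k)
    have hys2 : y ∈ s2 := hs2y (mem_gball_self y k)
    set u : V → V → ℝ := fun x' z =>
      (∑ j ∈ Finset.Icc 1 k, (μ (sepA G k x' z j ∩ E)).toReal / j) +
        (if z = x' then (μ (sepE G k x')).toReal else 0) with hudef
    set c : V → V → ℝ := fun x' z =>
      ∑ j ∈ Finset.Icc 1 k, (μ (sepA G k x' z j \ E)).toReal / j with hcdef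
    have hsplit : ∀ x' z : V, Θ x' z = u x' z + c x' z := by
      intro x' z
      have hterm : ∀ j ∈ Finset.Icc 1 k, (μ (sepA G k x' z j)).toReal / j
          = (μ (sepA G k x' z j ∩ E)).toReal / j + (μ (sepA G k x' z j \ E)).toReal / j := by
        intro j _
        rw [← add_div]
        congr 1
        rw [← ENNReal.toReal_add (hfinmeas _) (hfinmeas _),
          measure_inter_add_diff _ hEm]
      rw [hΘdef, hudef, hcdef]
      simp only
      rw [Finset.sum_congr rfl hterm, Finset.sum_add_distrib]
      ring
    have hceq : ∀ z : V, c x z = c y z := by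
      intro z
      rw [hcdef]
      simp only
      refine Finset.sum_congr rfl fun j _ => ?_
      have hset : sepA G k x z j \ E = sepA G k y z j \ E := by
        ext Y
        have key : Y ∉ E → (Y ∈ sepA G k x z j ↔ Y ∈ sepA G k y z j) := by
          intro hYE
          rw [hEdef, Set.mem_union] at hYE
          push_neg at hYE
          have hx0 : Y.1 x = false := by
            have := hYE.1
            simpa [sepE, Bool.not_eq_true] using this
          have hy0 : Y.1 y = false := by
            have := hYE.2
            simpa [sepE, Bool.not_eq_true] using this
          have hcc : sepComp G Y x = sepComp G Y y :=
            componentIn_eq_of_adj (mem_sepS.2 hx0) (mem_sepS.2 hy0) hxy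
          constructor
          · rintro ⟨_, hzC, hj⟩
            exact ⟨hy0, hcc ▸ hzC, hcc ▸ hj⟩
          · rintro ⟨_, hzC, hj⟩
            exact ⟨hx0, hcc.symm ▸ hzC, hcc.symm ▸ hj⟩
        constructor
        · rintro ⟨hYA, hYE⟩
          exact ⟨(key hYE).1 hYA, hYE⟩
        · rintro ⟨hYA, hYE⟩
          exact ⟨(key hYE).2 hYA, hYE⟩
      rw [hset]
    have hu0 : ∀ x' z : V, 0 ≤ u x' z := by
      intro x' z
      rw [hudef]
      have h1 : (0:ℝ) ≤ ∑ j ∈ Finset.Icc 1 k, (μ (sepA G k x' z j ∩ E)).toReal / j :=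
        Finset.sum_nonneg fun j _ => div_nonneg ENNReal.toReal_nonneg (Nat.cast_nonneg j)
      have h2 : (0:ℝ) ≤ if z = x' then (μ (sepE G k x')).toReal else 0 := by
        split <;> simp [ENNReal.toReal_nonneg]
      exact add_nonneg h1 h2
    have habs : ∀ z : V, |Θ x z - Θ y z| ≤ u x z + u y z := by
      intro z
      rw [hsplit x z, hsplit y z, hceq z]
      have h1 := hu0 x z
      have h2 := hu0 y z
      rw [abs_le]
      constructor <;> [linarith [abs_nonneg (u x z - u y z)]; skip]
      · linarith
    -- sum of u over s2
    have husum : ∀ x' : V, x' ∈ s2 → gball G x' k ⊆ ↑s2 →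
        ∑ z ∈ s2, u x' z
          = (∑ j ∈ Finset.Icc 1 k, (μ (sepB G k x' j ∩ E)).toReal)
            + (μ (sepE G k x')).toReal := by
      intro x' hx's hsub
      rw [hudef]
      simp only
      rw [Finset.sum_add_distrib, Finset.sum_ite_eq' s2 x' fun _ => (μ (sepE G k x')).toReal,
        if_pos hx's, Finset.sum_comm]
      congr 1
      exact Finset.sum_congr rfl fun j hj => hcount x' s2 hsub E hEm j hj
    have hBle : ∀ x' : V, (∑ j ∈ Finset.Icc 1 k, (μ (sepB G k x' j ∩ E)).toReal)
        ≤ (μ E).toReal := by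
      intro x'
      have h1 : ∑ j ∈ Finset.Icc 1 k, μ (sepB G k x' j ∩ E)
          = μ (⋃ j ∈ Finset.Icc 1 k, (sepB G k x' j ∩ E)) := by
        rw [measure_biUnion_finset ?_ (fun j _ =>
          (measurableSet_sepB x' j (hballfin x')).inter hEm)]
        intro j hj j' hj' hne
        rw [Function.onFun, Set.disjoint_left]
        rintro Y ⟨⟨_, hj1⟩, _⟩ ⟨⟨_, hj2⟩, _⟩
        exact hne (hj1 ▸ hj2)
      have h2 : μ (⋃ j ∈ Finset.Icc 1 k, (sepB G k x' j ∩ E)) ≤ μ E := by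
        refine measure_mono ?_
        intro Y hY
        simp only [Set.mem_iUnion] at hY
        obtain ⟨j, _, _, hYE⟩ := hY
        exact hYE
      calc ∑ j ∈ Finset.Icc 1 k, (μ (sepB G k x' j ∩ E)).toReal
          = (∑ j ∈ Finset.Icc 1 k, μ (sepB G k x' j ∩ E)).toReal :=
            (ENNReal.toReal_sum fun j _ => hfinmeas _).symm
        _ ≤ (μ E).toReal := by
            rw [h1]
            exact ENNReal.toReal_mono (hfinmeas _) h2
    have hEle : (μ E).toReal ≤ (μ (sepE G k x)).toReal + (μ (sepE G k y)).toReal := by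
      have h1 : μ E ≤ μ (sepE G k x) + μ (sepE G k y) := measure_union_le _ _
      calc (μ E).toReal ≤ (μ (sepE G k x) + μ (sepE G k y)).toReal :=
            ENNReal.toReal_mono (ENNReal.add_ne_top.2 ⟨hfinmeas _, hfinmeas _⟩) h1
        _ = (μ (sepE G k x)).toReal + (μ (sepE G k y)).toReal :=
            ENNReal.toReal_add (hfinmeas _) (hfinmeas _)
    -- final computation
    have hsupp2 : Function.support (fun z => |Θ x z - Θ y z|) ⊆ ↑s2 := by
      intro z hz
      rw [hs2def, Set.Finite.coe_toFinset]
      by_contra hzb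
      rw [Set.mem_union] at hzb
      push_neg at hzb
      apply hz
      simp only [Function.mem_support, ne_eq, not_not] at *
      rw [hvanish x z hzb.1, hvanish y z hzb.2, sub_zero, abs_zero]
    rw [finsum_eq_finset_sum_of_support_subset _ hsupp2]
    have hax := hEsmall x
    have hay := hEsmall y
    calc ∑ z ∈ s2, |Θ x z - Θ y z|
        ≤ ∑ z ∈ s2, (u x z + u y z) := Finset.sum_le_sum fun z _ => habs z
      _ = (∑ z ∈ s2, u x z) + ∑ z ∈ s2, u y z := Finset.sum_add_distrib
      _ ≤ ((μ E).toReal + (μ (sepE G k x)).toReal)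
          + ((μ E).toReal + (μ (sepE G k y)).toReal) := by
          rw [husum x hxs2 hs2x, husum y hys2 hs2y]
          have h1 := hBle x
          have h2 := hBle y
          gcongr
      _ < ε := by linarith

end AFPaper
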